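/- Let A be a 2×2 real matrix with det A = 1 and let u(θ) = (cos θ, sin θ). Then ∫₀^{2π} log ‖A·u(θ)‖ dθ ≥ 0. Moreover, if A is not orthogonal (i.e. Aᵀ·A ≠ 1, equivalently ‖A·u(θ)‖ is not identically 1), then the inequality is strict: ∫₀^{2π} log ‖A·u(θ)‖ dθ > 0. -/
import Mathlib


/-- The unit vector `(cos θ, sin θ)` in `ℝ²`. -/
noncomputable def unitVec (θ : ℝ) : Fin 2 → ℝ := ![Real.cos θ, Real.sin θ]

/-- Regard a pair of reals as a vector of the Euclidean plane (with the Euclidean norm). -/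
noncomputable def toE2 (v : Fin 2 → ℝ) : EuclideanSpace ℝ (Fin 2) :=
  (WithLp.equiv 2 (Fin 2 → ℝ)).symm v

open Real intervalIntegral

namespace LogNormAux
noncomputable def Q (A : Matrix (Fin 2) (Fin 2) ℝ) (θ : ℝ) : ℝ :=
  (A 0 0 * cos θ + A 0 1 * sin θ)^2 + (A 1 0 * cos θ + A 1 1 * sin θ)^2

lemma norm_eq (A : Matrix (Fin 2) (Fin 2) ℝ) (θ : ℝ) :
    ‖toE2 (A.mulVec (unitVec θ))‖ = Real.sqrt (Q A θ) := by
  simp [toE2, unitVec, Q, EuclideanSpace.norm_eq, Matrix.mulVec, dotProduct,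
    Fin.sum_univ_two, Real.norm_eq_abs, sq_abs]

lemma Q_nonneg (A : Matrix (Fin 2) (Fin 2) ℝ) (θ : ℝ) : 0 ≤ Q A θ := by
  unfold Q; positivity

lemma Q_cont (A : Matrix (Fin 2) (Fin 2) ℝ) : Continuous (Q A) := by
  unfold Q; fun_prop

lemma det_expand (A : Matrix (Fin 2) (Fin 2) ℝ) (hA : A.det = 1) :
    A 0 0 * A 1 1 - A 0 1 * A 1 0 = 1 := by
  rw [Matrix.det_fin_two] at hA; linarith

lemma key_prod (A : Matrix (Fin 2) (Fin 2) ℝ) (hA : A.det = 1) (θ : ℝ) :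
    1 ≤ Q A θ * Q A (θ + π/2) := by
  have h := det_expand A hA
  have hpyth := sin_sq_add_cos_sq θ
  have hdet2 : (A 0 0 * cos θ + A 0 1 * sin θ) * (A 1 0 * (-sin θ) + A 1 1 * cos θ)
      - (A 1 0 * cos θ + A 1 1 * sin θ) * (A 0 0 * (-sin θ) + A 0 1 * cos θ) = 1 := by
    linear_combination (A 0 0 * A 1 1 - A 0 1 * A 1 0) * hpyth + h
  simp only [Q, Real.cos_add_pi_div_two, Real.sin_add_pi_div_two]
  nlinarith [hdet2, sq_nonneg ((A 0 0 * cos θ + A 0 1 * sin θ) * (A 0 0 * (-sin θ) + A 0 1 * cos θ)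
    + (A 1 0 * cos θ + A 1 1 * sin θ) * (A 1 0 * (-sin θ) + A 1 1 * cos θ))]

lemma Q_pos (A : Matrix (Fin 2) (Fin 2) ℝ) (hA : A.det = 1) (θ : ℝ) : 0 < Q A θ := by
  nlinarith [key_prod A hA θ, Q_nonneg A θ, Q_nonneg A (θ + π/2)]

lemma eq_zero_of_integral_zero {g : ℝ → ℝ} (hg : Continuous g) (hnn : ∀ x, 0 ≤ g x)
    {a b : ℝ} (hab : a < b) (hI : ∫ x in a..b, g x = 0) {c : ℝ} (hc : c ∈ Set.Icc a b) :
    g c = 0 := by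
  by_contra h
  have hcpos : 0 < g c := lt_of_le_of_ne (hnn c) (Ne.symm h)
  have h1 : ∀ᶠ x in nhds c, g c / 2 < g x :=
    (hg.continuousAt (x := c)).eventually (eventually_gt_nhds (by linarith))
  obtain ⟨δ, hδ, hball⟩ := Metric.eventually_nhds_iff.mp h1
  set l := max a (c - δ/2) with hl
  set r := min b (c + δ/2) with hr
  have hal : a ≤ l := le_max_left _ _
  have hrb : r ≤ b := min_le_left _ _
  have hlr : l < r := by
    apply max_lt <;> apply lt_min
    · exact hab
    · linarith [hc.1]
    · linarith [hc.2]
    · linarith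
  have hmid : 0 < ∫ x in l..r, g x := by
    apply intervalIntegral_pos_of_pos_on (hg.intervalIntegrable l r) _ hlr
    intro x hx
    have hxl : c - δ/2 ≤ l := le_max_right _ _
    have hxr : r ≤ c + δ/2 := min_le_right _ _
    have : dist x c < δ := by
      rw [Real.dist_eq, abs_lt]
      constructor <;> [linarith [hx.1]; linarith [hx.2]]
    linarith [hball this]
  have s1 := integral_add_adjacent_intervals (μ := MeasureTheory.volume)
    (hg.intervalIntegrable a l) (hg.intervalIntegrable l b)
  have s2 := integral_add_adjacent_intervals (μ := MeasureTheory.volume)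
    (hg.intervalIntegrable l r) (hg.intervalIntegrable r b)
  rw [← s2] at s1
  have n1 : 0 ≤ ∫ x in a..l, g x := integral_nonneg hal (fun x _ => hnn x)
  have n2 : 0 ≤ ∫ x in r..b, g x := integral_nonneg hrb (fun x _ => hnn x)
  rw [← s1] at hI; linarith

end LogNormAux

set_option maxHeartbeats 1000000 in
open LogNormAux in
/-- For a 2×2 real matrix `A` with `det A = 1`, `∫₀^{2π} log ‖A·u(θ)‖ dθ ≥ 0`;
moreover if `A` is not orthogonal (`Aᵀ·A ≠ 1`) then the inequality is strict. -/
theorem log_norm_circle_integral_nonneg (A : Matrix (Fin 2) (Fin 2) ℝ) (hA : A.det = 1) :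
    (0 ≤ ∫ θ in (0:ℝ)..(2 * Real.pi), Real.log ‖toE2 (A.mulVec (unitVec θ))‖) ∧
    (A.transpose * A ≠ 1 →
      0 < ∫ θ in (0:ℝ)..(2 * Real.pi), Real.log ‖toE2 (A.mulVec (unitVec θ))‖) := by
  have hQpos := Q_pos A hA
  have hQnn := Q_nonneg A
  have hKey := key_prod A hA
  have h2pi : (0:ℝ) < 2 * π := Real.two_pi_pos
  set f : ℝ → ℝ := fun θ => Real.log ‖toE2 (A.mulVec (unitVec θ))‖ with hf
  have hfq : ∀ θ, f θ = Real.log (Real.sqrt (Q A θ)) := fun θ => by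
    rw [show f θ = Real.log ‖toE2 (A.mulVec (unitVec θ))‖ from rfl, norm_eq]
  have hfc : Continuous f := by
    have : f = fun θ => Real.log (Real.sqrt (Q A θ)) := funext hfq
    rw [this]
    exact ((Q_cont A).sqrt).log (fun θ => ne_of_gt (Real.sqrt_pos.mpr (hQpos θ)))
  have hpair : ∀ θ, f θ + f (θ + π/2) = Real.log (Q A θ * Q A (θ + π/2)) / 2 := by
    intro θ
    rw [hfq, hfq, ← Real.log_mul (ne_of_gt (Real.sqrt_pos.mpr (hQpos θ)))
      (ne_of_gt (Real.sqrt_pos.mpr (hQpos (θ + π/2)))),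
      ← Real.sqrt_mul (hQnn θ), Real.log_sqrt (mul_nonneg (hQnn θ) (hQnn _))]
  have hpairnn : ∀ θ, 0 ≤ f θ + f (θ + π/2) := by
    intro θ
    rw [hpair θ]
    have := Real.log_nonneg (hKey θ)
    linarith
  have hper : Function.Periodic f (2*π) := by
    intro θ
    rw [hfq, hfq]
    have : Q A (θ + 2*π) = Q A θ := by
      unfold Q; rw [Real.cos_add_two_pi, Real.sin_add_two_pi]
    rw [this]
  have hint : ∀ a b : ℝ, IntervalIntegrable f MeasureTheory.volume a b :=
    fun a b => hfc.intervalIntegrable a b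
  have hcont2 : Continuous (fun θ => f (θ + π/2)) := hfc.comp (continuous_add_right (π/2))
  have hint2 : IntervalIntegrable (fun θ => f (θ + π/2)) MeasureTheory.volume 0 (2*π) :=
    hcont2.intervalIntegrable 0 (2*π)
  have hshift : (∫ θ in (0:ℝ)..(2*π), f (θ + π/2)) = ∫ θ in (0:ℝ)..(2*π), f θ := by
    rw [intervalIntegral.integral_comp_add_right f (π/2)]
    have := hper.intervalIntegral_add_eq (π/2) 0
    simpa [add_comm] using this
  have htwo : (∫ θ in (0:ℝ)..(2*π), (f θ + f (θ + π/2)))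
      = 2 * ∫ θ in (0:ℝ)..(2*π), f θ := by
    rw [intervalIntegral.integral_add (hint 0 (2*π)) hint2, hshift]
    ring
  have hIg : 0 ≤ ∫ θ in (0:ℝ)..(2*π), (f θ + f (θ + π/2)) :=
    integral_nonneg h2pi.le (fun x _ => hpairnn x)
  have part1 : 0 ≤ ∫ θ in (0:ℝ)..(2*π), f θ := by
    rw [htwo] at hIg; linarith
  refine ⟨part1, ?_⟩
  intro hB
  rcases lt_or_eq_of_le part1 with h | h
  · exact h
  exfalso
  apply hB
  have hg0 : (∫ θ in (0:ℝ)..(2*π), (f θ + f (θ + π/2))) = 0 := by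
    rw [htwo, ← h]; ring
  have hgc : Continuous fun θ => f θ + f (θ + π/2) := hfc.add hcont2
  have hQprod : ∀ c ∈ Set.Icc (0:ℝ) (2*π), Q A c * Q A (c + π/2) = 1 := by
    intro c hc
    have h0 : f c + f (c + π/2) = 0 :=
      eq_zero_of_integral_zero hgc hpairnn h2pi hg0 hc
    rw [hpair c] at h0
    have hlog : Real.log (Q A c * Q A (c + π/2)) = 0 := by linarith
    have hpos : (0:ℝ) < Q A c * Q A (c + π/2) := mul_pos (hQpos c) (hQpos _)
    have := Real.exp_log hpos
    rw [hlog] at this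
    simpa using this.symm
  have hpi := hQprod π ⟨Real.pi_pos.le, by linarith [Real.pi_pos]⟩
  have hpi4 := hQprod (π/4) ⟨by linarith [Real.pi_pos], by linarith [Real.pi_pos]⟩
  simp only [Q, Real.cos_add_pi_div_two, Real.sin_add_pi_div_two, Real.cos_pi, Real.sin_pi,
    Real.cos_pi_div_four, Real.sin_pi_div_four] at hpi hpi4
  have h2 : Real.sqrt 2 ^ 2 = 2 := Real.sq_sqrt (by norm_num)
  have hdet := det_expand A hA
  have hac : (A 0 0^2 + A 1 0^2) * (A 0 1^2 + A 1 1^2) = 1 := by linear_combination hpi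
  have hb2 : (A 0 0 * A 0 1 + A 1 0 * A 1 1)^2 = 0 := by
    linear_combination hac - (A 0 0 * A 1 1 - A 0 1 * A 1 0 + 1) * hdet
  have hbz : A 0 0 * A 0 1 + A 1 0 * A 1 1 = 0 := by
    exact pow_eq_zero_iff (n := 2) (by norm_num) |>.mp hb2
  have hXY : ((A 0 0 + A 0 1)^2 + (A 1 0 + A 1 1)^2) *
      ((A 0 1 - A 0 0)^2 + (A 1 1 - A 1 0)^2) = 4 := by
    linear_combination 4 * hpi4 - (((A 0 0 + A 0 1)^2 + (A 1 0 + A 1 1)^2) *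
      ((A 0 1 - A 0 0)^2 + (A 1 1 - A 1 0)^2) / 4) * (Real.sqrt 2^2 + 2) * h2
  have hsum2 : (A 0 0^2 + A 1 0^2 + (A 0 1^2 + A 1 1^2))^2 = 4 := by
    linear_combination hXY + 4 * (A 0 0 * A 0 1 + A 1 0 * A 1 1) * hbz
  have hsum : A 0 0^2 + A 1 0^2 + (A 0 1^2 + A 1 1^2) = 2 := by
    have hs0 : (0:ℝ) ≤ A 0 0^2 + A 1 0^2 + (A 0 1^2 + A 1 1^2) := by positivity
    have hfac : (A 0 0^2 + A 1 0^2 + (A 0 1^2 + A 1 1^2) - 2) *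
        (A 0 0^2 + A 1 0^2 + (A 0 1^2 + A 1 1^2) + 2) = 0 := by linear_combination hsum2
    rcases mul_eq_zero.mp hfac with h' | h' <;> linarith
  have ha0 : (A 0 0^2 + A 1 0^2 - 1)^2 = 0 := by
    linear_combination (A 0 0^2 + A 1 0^2) * hsum - hac
  have ha1 : A 0 0^2 + A 1 0^2 = 1 := by
    have := pow_eq_zero_iff (n := 2) (by norm_num) |>.mp ha0
    linarith
  have hc1 : A 0 1^2 + A 1 1^2 = 1 := by linarith
  ext i j
  fin_cases i <;> fin_cases j <;>
    simp [Matrix.mul_apply, Matrix.transpose_apply, Fin.sum_univ_two, Matrix.one_apply]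
  · linear_combination ha1
  · linear_combination hbz
  · linear_combination hbz
  · linear_combination hc1
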